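/- arXiv:1912.09560 — 2 statements merged into one kernel-verified Lean document; each statement's English description precedes it below -/
import Mathlib

section
/- Quantile function of the GLMGA distribution: for all σ > 0, a > 0, b > 0, for every p ∈ (0,1) and every v ∈ (0,1) satisfying I_{1/2,a}(v) = 1 − p, the point q = (2b)^{-σ} · ( v/(1−v) )^{-σ} satisfies ∫_0^q f_{σ,a,b}(t) dt = p. -/
open MeasureTheory Real Filter Topology

/-- The (real) beta function `B(m,n) = ∫_0^1 t^(m-1) (1-t)^(n-1) dt`. -/
noncomputable def betaFn (m n : ℝ) : ℝ :=
  ∫ t in (0:ℝ)..1, t ^ (m - 1) * (1 - t) ^ (n - 1)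

/-- The regularized incomplete beta function `I_{m,n}(v)`. -/
noncomputable def regIncBeta (m n v : ℝ) : ℝ :=
  (∫ t in (0:ℝ)..v, t ^ (m - 1) * (1 - t) ^ (n - 1)) / betaFn m n

/-- The GLMGA density `f_{σ,a,b}`. -/
noncomputable def glmga (σ a b y : ℝ) : ℝ :=
  (2 * b) ^ a / (σ * betaFn a (1 / 2)) * y ^ (-(1 / (2 * σ) + 1))
    / (y ^ (-1 / σ) + 2 * b) ^ (a + 1 / 2)

lemma betaInt_intervalIntegrable {m n : ℝ} (hm : 0 < m) (hn : 0 < n) :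
    IntervalIntegrable (fun t : ℝ => t ^ (m - 1) * (1 - t) ^ (n - 1)) volume 0 1 := by
  have h := Complex.betaIntegral_convergent (u := (m : ℂ)) (v := (n : ℂ))
    (by simpa using hm) (by simpa using hn)
  have h1 : IntegrableOn (fun x : ℝ => (x : ℂ) ^ ((m:ℂ) - 1) * (1 - (x : ℂ)) ^ ((n:ℂ) - 1))
      (Set.Ioc 0 1) volume := h.1
  have hae : (fun x : ℝ => ((x : ℂ) ^ ((m:ℂ) - 1) * (1 - (x : ℂ)) ^ ((n:ℂ) - 1)).re)
      =ᵐ[volume.restrict (Set.Ioc (0:ℝ) 1)]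
      (fun t : ℝ => t ^ (m - 1) * (1 - t) ^ (n - 1)) := by
    refine (ae_restrict_iff' measurableSet_Ioc).2 (Filter.Eventually.of_forall fun x hx => ?_)
    have hx0 : (0:ℝ) ≤ x := hx.1.le
    have hx1 : (0:ℝ) ≤ 1 - x := by linarith [hx.2]
    have e1 : ((x : ℂ)) ^ ((m:ℂ) - 1) = ((x ^ (m-1) : ℝ) : ℂ) := by
      rw [Complex.ofReal_cpow hx0]; push_cast; ring_nf
    have e2 : ((1:ℂ) - (x : ℂ)) ^ ((n:ℂ) - 1) = (((1-x) ^ (n-1) : ℝ) : ℂ) := by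
      rw [show ((1:ℂ) - (x:ℂ)) = (((1-x : ℝ)) : ℂ) by push_cast; ring,
        Complex.ofReal_cpow hx1]; push_cast; ring_nf
    simp only [e1, e2, ← Complex.ofReal_mul, Complex.ofReal_re]
  have : IntegrableOn (fun t : ℝ => t ^ (m - 1) * (1 - t) ^ (n - 1)) (Set.Ioc 0 1) volume :=
    (h1.re.congr hae)
  exact (intervalIntegrable_iff_integrableOn_Ioc_of_le (by norm_num)).2 this

lemma betaFn_pos {m n : ℝ} (hm : 0 < m) (hn : 0 < n) : 0 < betaFn m n := by
  refine intervalIntegral.intervalIntegral_pos_of_pos_on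
    (betaInt_intervalIntegrable hm hn) (fun x hx => ?_) one_pos
  exact mul_pos (rpow_pos_of_pos hx.1 _) (rpow_pos_of_pos (by linarith [hx.2]) _)

lemma betaInt_reflect (m n c : ℝ) :
    (∫ t in (0:ℝ)..c, t ^ (m - 1) * (1 - t) ^ (n - 1))
      = ∫ t in (1-c)..1, t ^ (n - 1) * (1 - t) ^ (m - 1) := by
  have h := intervalIntegral.integral_comp_sub_left (a := (0:ℝ)) (b := c)
    (fun u : ℝ => u ^ (n - 1) * (1 - u) ^ (m - 1)) 1
  simp only [sub_zero] at h
  rw [← h]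
  refine intervalIntegral.integral_congr fun x hx => ?_
  simp only [sub_sub_cancel]
  ring

lemma betaFn_symm (m n : ℝ) : betaFn m n = betaFn n m := by
  have := betaInt_reflect m n 1
  simpa [betaFn] using this

set_option maxHeartbeats 1000000 in
/-- quantile function of the GLMGA distribution. -/
theorem glmga_quantile (σ a b p v : ℝ) (hσ : 0 < σ) (ha : 0 < a) (hb : 0 < b)
    (hp : p ∈ Set.Ioo (0:ℝ) 1) (hv : v ∈ Set.Ioo (0:ℝ) 1)
    (hIv : regIncBeta (1 / 2) a v = 1 - p) :
    ∫ t in (0:ℝ)..((2 * b) ^ (-σ) * (v / (1 - v)) ^ (-σ)), glmga σ a b t = p := by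
  obtain ⟨hv0, hv1⟩ := hv
  have hv1' : 0 < 1 - v := by linarith
  have h2b : (0:ℝ) < 2 * b := by linarith
  set w : ℝ := v / (1 - v) with hw_def
  have hw : 0 < w := div_pos hv0 hv1'
  set q : ℝ := (2 * b) ^ (-σ) * w ^ (-σ) with hq_def
  have hq : 0 < q := mul_pos (rpow_pos_of_pos h2b _) (rpow_pos_of_pos hw _)
  have hB : 0 < betaFn a (1/2) := betaFn_pos ha (by norm_num)
  have hB' : 0 < betaFn (1/2) a := betaFn_pos (by norm_num) ha
  set τ : ℝ → ℝ := fun y => 2 * b * y ^ (1/σ) / (1 + 2 * b * y ^ (1/σ)) with hτ_def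
  set φ : ℝ → ℝ := fun x => ∫ s in (0:ℝ)..x, s ^ (a - 1) * (1 - s) ^ (1/2 - 1 : ℝ) with hφ_def
  have hint1 : IntervalIntegrable (fun s : ℝ => s ^ (a - 1) * (1 - s) ^ (1/2 - 1 : ℝ))
      volume 0 1 := betaInt_intervalIntegrable ha (by norm_num)
  -- τ q = 1 - v
  have hq_pow : q ^ (1/σ) = (2*b)⁻¹ * w⁻¹ := by
    rw [hq_def, mul_rpow (rpow_nonneg h2b.le _) (rpow_nonneg hw.le _),
      ← rpow_mul h2b.le, ← rpow_mul hw.le,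
      show -σ * (1/σ) = -1 by field_simp, rpow_neg_one, rpow_neg_one]
  have hτq : τ q = 1 - v := by
    show 2 * b * q ^ (1/σ) / (1 + 2 * b * q ^ (1/σ)) = 1 - v
    rw [hq_pow, hw_def]
    have hvne : v ≠ 0 := hv0.ne'
    have h1vne : (1:ℝ) - v ≠ 0 := hv1'.ne'
    field_simp
    ring
  have hτ0 : τ 0 = 0 := by
    have h0 : (0:ℝ) ^ (1/σ) = 0 := Real.zero_rpow (by positivity)
    show 2 * b * (0:ℝ) ^ (1/σ) / (1 + 2 * b * (0:ℝ) ^ (1/σ)) = 0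
    rw [h0]; norm_num
  have hτ_mem : ∀ y ∈ Set.Icc (0:ℝ) q, τ y ∈ Set.Icc (0:ℝ) (1 - v) := by
    intro y hy
    have hY : 0 ≤ y ^ (1/σ) := rpow_nonneg hy.1 _
    have hYq' : 0 ≤ q ^ (1/σ) := rpow_nonneg hq.le _
    have hYle : y ^ (1/σ) ≤ q ^ (1/σ) := rpow_le_rpow hy.1 hy.2 (by positivity)
    constructor
    · exact div_nonneg (by nlinarith) (by nlinarith)
    · rw [← hτq]
      show 2 * b * y ^ (1/σ) / (1 + 2 * b * y ^ (1/σ))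
          ≤ 2 * b * q ^ (1/σ) / (1 + 2 * b * q ^ (1/σ))
      rw [div_le_div_iff₀ (by nlinarith) (by nlinarith)]
      nlinarith
  -- continuity of the antiderivative on [0, q]
  have hφint : IntegrableOn (fun s : ℝ => s ^ (a - 1) * (1 - s) ^ (1/2 - 1 : ℝ))
      (Set.uIcc 0 (1-v)) volume := by
    rw [Set.uIcc_of_le hv1'.le, integrableOn_Icc_iff_integrableOn_Ioc]
    exact (hint1.mono_set (by
      rw [Set.uIcc_of_le hv1'.le, Set.uIcc_of_le (by norm_num : (0:ℝ) ≤ 1)]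
      exact Set.Icc_subset_Icc le_rfl (by linarith))).1
  have hφcont : ContinuousOn φ (Set.Icc 0 (1-v)) := by
    have := intervalIntegral.continuousOn_primitive_interval hφint
    rwa [Set.uIcc_of_le hv1'.le] at this
  have hτcont : ContinuousOn τ (Set.Icc 0 q) := by
    intro y hy
    have hY : 0 ≤ y ^ (1/σ) := rpow_nonneg hy.1 _
    have hc : ContinuousAt (fun z : ℝ => 2 * b * z ^ (1/σ)) y :=
      continuousAt_const.mul (Real.continuousAt_rpow_const y (1/σ) (Or.inr (by positivity)))
    exact (hc.div (continuousAt_const.add hc) (by show (1:ℝ) + 2 * b * y ^ (1/σ) ≠ 0; nlinarith)).continuousWithinAt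
  have hcont : ContinuousOn (fun y => (betaFn a (1/2))⁻¹ * φ (τ y)) (Set.Icc 0 q) :=
    continuousOn_const.mul (hφcont.comp hτcont hτ_mem)
  -- derivative on (0, q)
  have hderiv : ∀ y ∈ Set.Ioo (0:ℝ) q,
      HasDerivAt (fun y => (betaFn a (1/2))⁻¹ * φ (τ y)) (glmga σ a b y) y := by
    intro y hy
    obtain ⟨hy0, hyq⟩ := hy
    have hY : 0 < y ^ (1/σ) := rpow_pos_of_pos hy0 _
    have hD : 0 < 1 + 2 * b * y ^ (1/σ) := by nlinarith
    have ht0 : 0 < τ y := div_pos (by nlinarith) hD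
    have ht1 : τ y < 1 := by
      show 2 * b * y ^ (1/σ) / (1 + 2 * b * y ^ (1/σ)) < 1
      rw [div_lt_one hD]; nlinarith
    have hYd : HasDerivAt (fun z : ℝ => z ^ (1/σ)) (1/σ * y ^ (1/σ - 1)) y := by
      simpa using Real.hasDerivAt_rpow_const (p := 1/σ) (Or.inl hy0.ne')
    have hnum : HasDerivAt (fun z : ℝ => 2 * b * z ^ (1/σ)) (2 * b * (1/σ * y ^ (1/σ - 1))) y :=
      hYd.const_mul _
    have hden : HasDerivAt (fun z : ℝ => 1 + 2 * b * z ^ (1/σ))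
        (2 * b * (1/σ * y ^ (1/σ - 1))) y := by
      simpa using hnum.const_add 1
    have hτd : HasDerivAt τ
        ((2 * b * (1/σ * y ^ (1/σ - 1)) * (1 + 2 * b * y ^ (1/σ))
          - 2 * b * y ^ (1/σ) * (2 * b * (1/σ * y ^ (1/σ - 1)))) / (1 + 2 * b * y ^ (1/σ)) ^ 2) y :=
      hnum.div hden hD.ne'
    have hφd : HasDerivAt φ ((τ y) ^ (a - 1) * (1 - τ y) ^ (1/2 - 1 : ℝ)) (τ y) := by
      rw [hφ_def]
      apply intervalIntegral.integral_hasDerivAt_right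
      · exact hint1.mono_set (by
          rw [Set.uIcc_of_le ht0.le, Set.uIcc_of_le (by norm_num : (0:ℝ) ≤ 1)]
          exact Set.Icc_subset_Icc le_rfl ht1.le)
      · refine ⟨Set.Ioo 0 1, Ioo_mem_nhds ht0 ht1,
          ContinuousOn.aestronglyMeasurable ?_ measurableSet_Ioo⟩
        intro x hx
        exact (((Real.continuousAt_rpow_const x _ (Or.inl hx.1.ne')).mul
          (((Real.continuousAt_rpow_const (1 - x) _
              (Or.inl (by linarith [hx.2] : (1:ℝ) - x ≠ 0)))).comp
            ((continuous_const.sub continuous_id).continuousAt)))).continuousWithinAt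
      · exact (Real.continuousAt_rpow_const (τ y) _ (Or.inl ht0.ne')).mul
          (((Real.continuousAt_rpow_const (1 - τ y) _ (Or.inl (by linarith : (1:ℝ) - τ y ≠ 0)))).comp
            ((continuous_const.sub continuous_id).continuousAt))
    have hchain := (hφd.comp y hτd).const_mul ((betaFn a (1/2))⁻¹)
    have halg : glmga σ a b y =
        (betaFn a (1/2))⁻¹ *
          ((2 * b * y ^ (1/σ) / (1 + 2 * b * y ^ (1/σ))) ^ (a - 1)
            * (1 - 2 * b * y ^ (1/σ) / (1 + 2 * b * y ^ (1/σ))) ^ ((1:ℝ)/2 - 1)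
            * ((2 * b * (1/σ * y ^ (1/σ - 1)) * (1 + 2 * b * y ^ (1/σ))
                - 2 * b * y ^ (1/σ) * (2 * b * (1/σ * y ^ (1/σ - 1))))
               / (1 + 2 * b * y ^ (1/σ)) ^ 2)) := by
      have hnum2 : 2 * b * (1/σ * y ^ (1/σ - 1)) * (1 + 2 * b * y ^ (1/σ))
          - 2 * b * y ^ (1/σ) * (2 * b * (1/σ * y ^ (1/σ - 1)))
          = 2 * b * (1/σ) * y ^ (1/σ - 1) := by ring
      have h1τ : 1 - 2 * b * y ^ (1/σ) / (1 + 2 * b * y ^ (1/σ))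
          = (1 + 2 * b * y ^ (1/σ))⁻¹ := by field_simp; ring
      rw [hnum2, h1τ]
      have hyinv : y ^ (-1/σ) + 2 * b = (1 + 2 * b * y ^ (1/σ)) / y ^ (1/σ) := by
        rw [show (-1/σ : ℝ) = -(1/σ) by ring, rpow_neg hy0.le]
        field_simp
      rw [glmga, hyinv, div_rpow hD.le hY.le]
      rw [div_rpow (by positivity : (0:ℝ) ≤ 2 * b * y ^ (1/σ)) hD.le,
        mul_rpow h2b.le hY.le, inv_rpow hD.le]
      rw [← rpow_mul hy0.le, ← rpow_mul hy0.le]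
      rw [← rpow_natCast (1 + 2 * b * y ^ (1/σ)) 2]
      have e1 : y ^ (-(1/(2*σ)+1)) * y ^ (1/σ*(a+1/2)) = y ^ (a/σ - 1) := by
        rw [← rpow_add hy0]; congr 1; field_simp; try ring
      have e2 : y ^ (1/σ*(a-1)) * y ^ (1/σ - 1) = y ^ (a/σ - 1) := by
        rw [← rpow_add hy0]; congr 1; field_simp; try ring
      have e3 : (2*b)^(a-1) * (2*b) = (2*b)^a := by
        nth_rewrite 2 [← rpow_one (2*b)]
        rw [← rpow_add h2b]; ring_nf
      have e4 : (1 + 2 * b * y ^ (1/σ))^(a-1) * (1 + 2 * b * y ^ (1/σ))^((1:ℝ)/2-1)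
          * (1 + 2 * b * y ^ (1/σ))^((2:ℕ):ℝ) = (1 + 2 * b * y ^ (1/σ))^(a+1/2) := by
        rw [← rpow_add hD, ← rpow_add hD]; congr 1; push_cast; ring
      calc (2 * b) ^ a / (σ * betaFn a (1/2)) * y ^ (-(1 / (2 * σ) + 1))
            / ((1 + 2 * b * y ^ (1/σ)) ^ (a + 1/2) / y ^ (1/σ * (a + 1/2)))
          = (2*b)^a * (y ^ (-(1/(2*σ)+1)) * y ^ (1/σ*(a+1/2)))
              / (σ * betaFn a (1/2) * (1 + 2 * b * y ^ (1/σ))^(a+1/2)) := by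
            rw [div_div_eq_mul_div]; ring
        _ = (2*b)^a * y ^ (a/σ - 1)
              / (σ * betaFn a (1/2) * (1 + 2 * b * y ^ (1/σ))^(a+1/2)) := by rw [e1]
        _ = (betaFn a (1/2))⁻¹ * ((2 * b) ^ (a - 1) * y ^ (1/σ * (a - 1))
              / (1 + 2 * b * y ^ (1/σ)) ^ (a - 1)
              * ((1 + 2 * b * y ^ (1/σ)) ^ ((1:ℝ)/2 - 1))⁻¹ *
              (2 * b * (1/σ) * y ^ (1/σ - 1) / (1 + 2 * b * y ^ (1/σ)) ^ ((2:ℕ):ℝ))) := by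
            rw [← e2, ← e3, ← e4]; field_simp
    rw [halg]
    exact hchain
  -- integrability of glmga on [0, q]
  have hintg : IntervalIntegrable (glmga σ a b) volume 0 q := by
    rw [intervalIntegrable_iff_integrableOn_Ioc_of_le hq.le]
    have hK : 0 < (2 * b) ^ a / (σ * betaFn a (1/2)) := by positivity
    set K : ℝ := (2 * b) ^ a / (σ * betaFn a (1/2)) with hK_def
    have hexp : (-1 : ℝ) < a/σ - 1 := by
      have : 0 < a / σ := by positivity
      linarith
    have hg : IntegrableOn (fun y : ℝ => K * y ^ (a/σ - 1)) (Set.Ioc 0 q) volume :=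
      ((intervalIntegral.intervalIntegrable_rpow' hexp (a := 0) (b := q)).const_mul K).1
    have hmeas : AEStronglyMeasurable (glmga σ a b) (volume.restrict (Set.Ioc 0 q)) := by
      refine ContinuousOn.aestronglyMeasurable (fun y hy => ?_) measurableSet_Ioc
      have hy0 : 0 < y := hy.1
      have hyY : 0 < y ^ (-1/σ) := rpow_pos_of_pos hy0 _
      have hden : (0:ℝ) < (y ^ (-1/σ) + 2 * b) ^ (a + 1/2) :=
        rpow_pos_of_pos (by nlinarith) _
      refine ContinuousWithinAt.div ?_ ?_ hden.ne'
      · exact ((continuousAt_const.mul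
          (Real.continuousAt_rpow_const y _ (Or.inl hy0.ne')))).continuousWithinAt
      · have hin : ContinuousAt (fun z : ℝ => z ^ (-1/σ) + 2 * b) y :=
          (Real.continuousAt_rpow_const y _ (Or.inl hy0.ne')).add continuousAt_const
        exact (hin.rpow_const (Or.inl (by nlinarith : y ^ (-1/σ) + 2*b ≠ 0))).continuousWithinAt
    refine Integrable.mono' hg hmeas ?_
    refine (ae_restrict_iff' measurableSet_Ioc).2 (Filter.Eventually.of_forall fun y hy => ?_)
    have hy0 : 0 < y := hy.1
    have hyY : 0 < y ^ (-1/σ) := rpow_pos_of_pos hy0 _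
    have hden0 : (0:ℝ) < y ^ (-1/σ) + 2 * b := by nlinarith
    have hden : (0:ℝ) < (y ^ (-1/σ) + 2 * b) ^ (a + 1/2) := rpow_pos_of_pos hden0 _
    have hglmga_pos : 0 ≤ glmga σ a b y := by
      rw [glmga]; positivity
    rw [Real.norm_of_nonneg hglmga_pos, glmga]
    have hmono : (y ^ (-1/σ)) ^ (a + 1/2) ≤ (y ^ (-1/σ) + 2 * b) ^ (a + 1/2) :=
      rpow_le_rpow hyY.le (by linarith) (by positivity)
    have hstep : (2 * b) ^ a / (σ * betaFn a (1/2)) * y ^ (-(1 / (2 * σ) + 1))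
        / (y ^ (-1/σ) + 2 * b) ^ (a + 1/2)
        ≤ (2 * b) ^ a / (σ * betaFn a (1/2)) * y ^ (-(1 / (2 * σ) + 1))
        / (y ^ (-1/σ)) ^ (a + 1/2) := by
      apply div_le_div_of_nonneg_left _ (by positivity) hmono
      positivity
    refine hstep.trans (le_of_eq ?_)
    rw [← rpow_mul hy0.le, div_eq_mul_inv, ← rpow_neg hy0.le, mul_assoc, ← rpow_add hy0, hK_def]
    congr 2
    field_simp
    ring
  -- FTC
  have hFTC : ∫ t in (0:ℝ)..q, glmga σ a b t
      = (betaFn a (1/2))⁻¹ * φ (τ q) - (betaFn a (1/2))⁻¹ * φ (τ 0) :=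
    intervalIntegral.integral_eq_sub_of_hasDeriv_right_of_le hq.le hcont
      (fun y hy => ((hderiv y hy).hasDerivWithinAt)) hintg
  rw [hFTC, hτq, hτ0]
  have hφ0 : φ 0 = 0 := intervalIntegral.integral_same
  have hrefl : φ (1 - v) = ∫ t in v..1, t ^ ((1:ℝ)/2 - 1) * (1 - t) ^ (a - 1) := by
    have := betaInt_reflect a (1/2) (1 - v)
    simpa [hφ_def] using this
  have hint2 : IntervalIntegrable (fun t : ℝ => t ^ ((1:ℝ)/2 - 1) * (1 - t) ^ (a - 1))
      volume 0 1 := betaInt_intervalIntegrable (by norm_num) ha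
  have hsplit : (∫ t in (0:ℝ)..v, t ^ ((1:ℝ)/2 - 1) * (1 - t) ^ (a - 1))
      + (∫ t in v..1, t ^ ((1:ℝ)/2 - 1) * (1 - t) ^ (a - 1)) = betaFn (1/2) a := by
    rw [betaFn]
    exact intervalIntegral.integral_add_adjacent_intervals
      (hint2.mono_set (by
        rw [Set.uIcc_of_le hv0.le, Set.uIcc_of_le (by norm_num : (0:ℝ) ≤ 1)]
        exact Set.Icc_subset_Icc le_rfl hv1.le))
      (hint2.mono_set (by
        rw [Set.uIcc_of_le hv1.le, Set.uIcc_of_le (by norm_num : (0:ℝ) ≤ 1)]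
        exact Set.Icc_subset_Icc hv0.le le_rfl))
  have hIv' : (∫ t in (0:ℝ)..v, t ^ ((1:ℝ)/2 - 1) * (1 - t) ^ (a - 1))
      = (1 - p) * betaFn (1/2) a := by
    rw [regIncBeta, div_eq_iff hB'.ne'] at hIv
    exact hIv
  have hval : φ (1 - v) = p * betaFn (1/2) a := by
    rw [hrefl]; linarith [hsplit, hIv']
  rw [hφ0, hval, betaFn_symm a (1/2)]
  field_simp; ring
end

section
/- Asymptotic behaviour of the mean excess function of the GLMGA distribution: for all a, b > 0 and 0 < σ < 1/2, letting F̄(u) = ∫_u^∞ f_{σ,a,b}(t) dt, the mean excess function e(u) = ( ∫_u^∞ y f_{σ,a,b}(y) dy ) / F̄(u) − u satisfies lim_{u→∞} e(u)/u = 2σ/(1 − 2σ). -/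
open MeasureTheory Real Filter Topology Set

/- ### Auxiliary lemmas about tail integrals -/

lemma tail_key (φ : ℝ → ℝ) (hint : IntegrableOn φ (Ioi 1)) :
    ∀ u : ℝ, 1 ≤ u →
      (∫ y in Ioi u, φ y) = (∫ y in Ioi 1, φ y) - ∫ y in (1:ℝ)..u, φ y := by
  intro u hu
  have hsplit := setIntegral_union (f := φ) (μ := volume)
    (Ioc_disjoint_Ioi (le_refl u)) measurableSet_Ioi
    (hint.mono_set Ioc_subset_Ioi_self) (hint.mono_set (Ioi_subset_Ioi hu))
  rw [Ioc_union_Ioi_eq_Ioi hu] at hsplit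
  rw [intervalIntegral.integral_of_le hu, hsplit]; ring

lemma tail_tendsto (φ : ℝ → ℝ) (hint : IntegrableOn φ (Ioi 1)) :
    Tendsto (fun u => ∫ y in Ioi u, φ y) atTop (𝓝 0) := by
  have h1 := intervalIntegral_tendsto_integral_Ioi 1 hint tendsto_id
  have h2 : Tendsto (fun u => (∫ y in Ioi 1, φ y) - ∫ y in (1:ℝ)..u, φ y) atTop
      (𝓝 ((∫ y in Ioi 1, φ y) - (∫ y in Ioi 1, φ y))) := tendsto_const_nhds.sub h1
  rw [sub_self] at h2
  exact h2.congr' (by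
    filter_upwards [eventually_ge_atTop (1:ℝ)] with u hu using (tail_key φ hint u hu).symm)

lemma tail_hasDerivAt (φ : ℝ → ℝ) (hint : IntegrableOn φ (Ioi 1))
    (hcont : ∀ x : ℝ, 0 < x → ContinuousAt φ x) {u : ℝ} (hu : 1 < u) :
    HasDerivAt (fun v => ∫ y in Ioi v, φ y) (-φ u) u := by
  have hii : IntervalIntegrable φ volume 1 u := by
    rw [intervalIntegrable_iff_integrableOn_Ioc_of_le hu.le]
    exact hint.mono_set Ioc_subset_Ioi_self
  have hmeas : StronglyMeasurableAtFilter φ (𝓝 u) volume :=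
    ContinuousAt.stronglyMeasurableAtFilter isOpen_Ioi
      (fun x hx => hcont x (lt_trans one_pos hx)) u hu
  have hd := (intervalIntegral.integral_hasDerivAt_right hii hmeas
    (hcont u (by linarith))).const_sub (∫ y in Ioi 1, φ y)
  refine hd.congr_of_eventuallyEq ?_
  filter_upwards [Ioi_mem_nhds hu] with v hv
  exact tail_key φ hint v (le_of_lt hv)

/- ### Auxiliary lemmas about the GLMGA density -/

lemma betaFn_pos_s12 {a : ℝ} (ha : 0 < a) : 0 < betaFn a (1/2) := by
  have hint : IntervalIntegrable
      (fun t : ℝ => t ^ (a - 1) * (1 - t) ^ ((1:ℝ)/2 - 1)) volume 0 1 := by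
    have h1 : IntervalIntegrable
        (fun t : ℝ => t ^ (a - 1) * (1 - t) ^ ((1:ℝ)/2 - 1)) volume 0 (1/2) := by
      apply IntervalIntegrable.mul_continuousOn
        (intervalIntegral.intervalIntegrable_rpow' (by linarith))
      apply ContinuousOn.rpow_const (continuousOn_const.sub continuousOn_id)
      intro x hx
      rw [uIcc_of_le (by norm_num)] at hx
      exact Or.inl (by simp only [Pi.sub_apply, id_eq]; nlinarith [hx.2])
    have h2 : IntervalIntegrable
        (fun t : ℝ => t ^ (a - 1) * (1 - t) ^ ((1:ℝ)/2 - 1)) volume (1/2) 1 := by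
      apply IntervalIntegrable.continuousOn_mul
      · have h3 : IntervalIntegrable (fun x : ℝ => x ^ ((1:ℝ)/2 - 1)) volume 0 (1/2) :=
          intervalIntegral.intervalIntegrable_rpow' (by norm_num)
        have h4 := h3.comp_sub_left 1
        norm_num at h4
        have he : (1:ℝ)/2 - 1 = -(1/2) := by norm_num
        rw [he]
        exact h4.symm
      · apply ContinuousOn.rpow_const continuousOn_id
        intro x hx
        rw [uIcc_of_le (by norm_num)] at hx
        exact Or.inl (by simp only [id]; nlinarith [hx.1])
    exact h1.trans h2
  rw [betaFn]
  apply intervalIntegral.intervalIntegral_pos_of_pos_on hint ?_ one_pos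
  intro x hx
  exact mul_pos (rpow_pos_of_pos hx.1 _) (rpow_pos_of_pos (by linarith [hx.2]) _)

lemma glmga_eq {σ a b : ℝ} (hb : 0 < b) {y : ℝ} (hy : 0 < y) :
    glmga σ a b y = (2 * b) ^ a / (σ * betaFn a (1 / 2)) *
      (y ^ (-(1 / (2 * σ) + 1)) * (y ^ (-1 / σ) + 2 * b) ^ (-(a + 1 / 2))) := by
  have hD : 0 < y ^ (-1/σ) + 2 * b := by
    have := Real.rpow_pos_of_pos hy (-1/σ); linarith
  rw [glmga, Real.rpow_neg hD.le, div_eq_mul_inv, mul_assoc]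

lemma glmga_pos {σ a b : ℝ} (hσ : 0 < σ) (ha : 0 < a) (hb : 0 < b) {y : ℝ} (hy : 0 < y) :
    0 < glmga σ a b y := by
  have hD : 0 < y ^ (-1/σ) + 2 * b := by
    have := Real.rpow_pos_of_pos hy (-1/σ); linarith
  have hB := betaFn_pos_s12 ha
  rw [glmga]
  have h2b : (0:ℝ) < 2 * b := by linarith
  exact div_pos (mul_pos (div_pos (rpow_pos_of_pos h2b a) (by positivity))
    (rpow_pos_of_pos hy _)) (rpow_pos_of_pos hD _)

lemma glmga_continuousAt {σ a b : ℝ} (hb : 0 < b) {y : ℝ} (hy : 0 < y) :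
    ContinuousAt (glmga σ a b) y := by
  have hD : 0 < y ^ (-1/σ) + 2 * b := by
    have := Real.rpow_pos_of_pos hy (-1/σ); linarith
  unfold glmga
  apply ContinuousAt.div
  · exact continuousAt_const.mul
      (Real.continuousAt_rpow_const _ _ (Or.inl hy.ne'))
  · exact (((Real.continuousAt_rpow_const _ _ (Or.inl hy.ne')).add
      continuousAt_const).rpow_const (Or.inl hD.ne'))
  · exact (rpow_pos_of_pos hD _).ne'

lemma glmga_hasDerivAt {σ a b : ℝ} (hσ : 0 < σ) (hb : 0 < b) {y : ℝ} (hy : 0 < y) :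
    HasDerivAt (glmga σ a b)
      (glmga σ a b y / y *
        ((a + 1/2)/σ * (y ^ (-1/σ) / (y ^ (-1/σ) + 2*b)) - (1/(2*σ) + 1))) y := by
  have hDy : 0 < y ^ (-1/σ) + 2 * b := by
    have := Real.rpow_pos_of_pos hy (-1/σ); linarith
  set C := (2 * b) ^ a / (σ * betaFn a (1 / 2)) with hC
  have h1 : HasDerivAt (fun x : ℝ => x ^ (-(1 / (2 * σ) + 1)))
      ((-(1 / (2 * σ) + 1)) * y ^ ((-(1 / (2 * σ) + 1)) - 1)) y :=
    Real.hasDerivAt_rpow_const (Or.inl hy.ne')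
  have h2 : HasDerivAt (fun x : ℝ => (x ^ (-1/σ) + 2*b) ^ (-(a + 1/2)))
      (((-1/σ) * y ^ ((-1/σ) - 1)) * (-(a + 1/2)) * (y ^ (-1/σ) + 2*b) ^ ((-(a + 1/2)) - 1)) y :=
    ((Real.hasDerivAt_rpow_const (Or.inl hy.ne')).add_const (2*b)).rpow_const (Or.inl hDy.ne')
  have h3 := (h1.mul h2).const_mul C
  have heq : (fun x : ℝ => C * (x ^ (-(1 / (2 * σ) + 1)) * (x ^ (-1/σ) + 2*b) ^ (-(a + 1/2))))
      =ᶠ[𝓝 y] glmga σ a b := by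
    filter_upwards [Ioi_mem_nhds hy] with x hx
    exact (glmga_eq hb hx).symm
  have h4 := h3.congr_of_eventuallyEq heq.symm
  refine h4.congr_deriv ?_
  symm
  rw [glmga_eq hb hy, Real.rpow_sub hy, Real.rpow_sub hy, Real.rpow_sub hDy,
    Real.rpow_one, Real.rpow_one, mul_div_assoc, mul_assoc]
  congr 1
  field_simp
  ring

lemma glmga_bound {σ a b : ℝ} (hσ : 0 < σ) (ha : 0 < a) (hb : 0 < b) {y : ℝ} (hy : 0 < y) :
    glmga σ a b y ≤ ((2 * b) ^ a / (σ * betaFn a (1 / 2)) * (2*b) ^ (-(a + 1/2)))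
      * y ^ (-(1 / (2 * σ) + 1)) := by
  have hY2 := Real.rpow_pos_of_pos hy (-1/σ)
  have hD : 0 < y ^ (-1/σ) + 2 * b := by linarith
  have h2b : (0:ℝ) < 2 * b := by linarith
  have hB := betaFn_pos_s12 ha
  have hC : 0 < (2 * b) ^ a / (σ * betaFn a (1 / 2)) :=
    div_pos (rpow_pos_of_pos h2b a) (by positivity)
  rw [glmga_eq hb hy]
  have hmono : (y ^ (-1/σ) + 2*b) ^ (-(a + 1/2)) ≤ (2*b) ^ (-(a + 1/2)) := by
    apply Real.rpow_le_rpow_of_nonpos h2b (by linarith) (by linarith)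
  calc (2 * b) ^ a / (σ * betaFn a (1 / 2)) *
        (y ^ (-(1 / (2 * σ) + 1)) * (y ^ (-1 / σ) + 2 * b) ^ (-(a + 1 / 2)))
      ≤ (2 * b) ^ a / (σ * betaFn a (1 / 2)) *
        (y ^ (-(1 / (2 * σ) + 1)) * (2*b) ^ (-(a + 1/2))) := by
        apply mul_le_mul_of_nonneg_left _ hC.le
        exact mul_le_mul_of_nonneg_left hmono (rpow_pos_of_pos hy _).le
    _ = ((2 * b) ^ a / (σ * betaFn a (1 / 2)) * (2*b) ^ (-(a + 1/2)))
        * y ^ (-(1 / (2 * σ) + 1)) := by ring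

lemma glmga_integrableOn {σ a b : ℝ} (hσ : 0 < σ) (hσ2 : σ < 1/2) (ha : 0 < a) (hb : 0 < b) :
    IntegrableOn (glmga σ a b) (Ioi 1) := by
  have hα : 1 < 1/(2*σ) := by
    rw [lt_div_iff₀ (by linarith)]; linarith
  set M := (2 * b) ^ a / (σ * betaFn a (1 / 2)) * (2*b) ^ (-(a + 1/2)) with hM
  have hg : IntegrableOn (fun y : ℝ => M * y ^ (-(1 / (2 * σ) + 1))) (Ioi 1) :=
    (integrableOn_Ioi_rpow_of_lt (by linarith) one_pos).const_mul M
  apply hg.mono' ?_ ?_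
  · exact (ContinuousOn.aestronglyMeasurable
      (fun x hx => (glmga_continuousAt hb (lt_trans one_pos hx)).continuousWithinAt)
      measurableSet_Ioi)
  · rw [ae_restrict_iff' measurableSet_Ioi]
    filter_upwards with y hy
    rw [Real.norm_eq_abs, abs_of_pos (glmga_pos hσ ha hb (lt_trans one_pos hy))]
    exact glmga_bound hσ ha hb (lt_trans one_pos hy)

lemma glmga_mul_integrableOn {σ a b : ℝ} (hσ : 0 < σ) (hσ2 : σ < 1/2) (ha : 0 < a) (hb : 0 < b) :
    IntegrableOn (fun y => y * glmga σ a b y) (Ioi 1) := by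
  have hα : 1 < 1/(2*σ) := by
    rw [lt_div_iff₀ (by linarith)]; linarith
  set M := (2 * b) ^ a / (σ * betaFn a (1 / 2)) * (2*b) ^ (-(a + 1/2)) with hM
  have hg : IntegrableOn (fun y : ℝ => M * y ^ (-(1 / (2 * σ)))) (Ioi 1) :=
    (integrableOn_Ioi_rpow_of_lt (by linarith) one_pos).const_mul M
  apply hg.mono' ?_ ?_
  · exact (ContinuousOn.aestronglyMeasurable
      (fun x hx => (continuousAt_id.mul
        (glmga_continuousAt hb (lt_trans one_pos hx))).continuousWithinAt)
      measurableSet_Ioi)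
  · rw [ae_restrict_iff' measurableSet_Ioi]
    filter_upwards with y hy
    have hy0 : (0:ℝ) < y := lt_trans one_pos hy
    rw [Real.norm_eq_abs, abs_of_pos (mul_pos hy0 (glmga_pos hσ ha hb hy0))]
    have h1 : y * glmga σ a b y ≤ y * (M * y ^ (-(1 / (2 * σ) + 1))) :=
      mul_le_mul_of_nonneg_left (glmga_bound hσ ha hb hy0) hy0.le
    calc y * glmga σ a b y ≤ y * (M * y ^ (-(1 / (2 * σ) + 1))) := h1
      _ = M * y ^ (-(1 / (2 * σ))) := by
          rw [show -(1 / (2 * σ)) = 1 + (-(1 / (2 * σ) + 1)) by ring,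
            Real.rpow_add hy0, Real.rpow_one]; ring

/- ### Limit lemmas -/

lemma denom_tendsto {σ b : ℝ} (hσ : 0 < σ) (hb : 0 < b) :
    Tendsto (fun u : ℝ => u ^ (-1/σ) + 2*b) atTop (𝓝 (2*b)) := by
  have h1 : Tendsto (fun u : ℝ => u ^ (-1/σ)) atTop (𝓝 0) := by
    rw [show (-1/σ : ℝ) = -(1/σ) by ring]
    exact tendsto_rpow_neg_atTop (by positivity)
  simpa using h1.add tendsto_const_nhds

lemma denomPow_tendsto {σ a b : ℝ} (hσ : 0 < σ) (hb : 0 < b) :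
    Tendsto (fun u : ℝ => (u ^ (-1/σ) + 2*b) ^ (-(a + 1/2))) atTop (𝓝 ((2*b) ^ (-(a + 1/2)))) :=
  ((Real.continuousAt_rpow_const (2*b) (-(a + 1/2)) (Or.inl (by positivity))).tendsto).comp
    (denom_tendsto hσ hb)

lemma mul_glmga_tendsto {σ a b : ℝ} (hσ : 0 < σ) (hσ2 : σ < 1/2) (ha : 0 < a) (hb : 0 < b) :
    Tendsto (fun u : ℝ => u * glmga σ a b u) atTop (𝓝 0) := by
  set C := (2 * b) ^ a / (σ * betaFn a (1 / 2)) with hC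
  have h1 : Tendsto (fun u : ℝ => C * u ^ (-(1/(2*σ))) * (u ^ (-1/σ) + 2*b) ^ (-(a + 1/2)))
      atTop (𝓝 (C * 0 * (2*b) ^ (-(a + 1/2)))) :=
    ((tendsto_const_nhds.mul (tendsto_rpow_neg_atTop (by positivity))).mul
      (denomPow_tendsto hσ hb))
  rw [mul_zero, zero_mul] at h1
  apply h1.congr'
  filter_upwards [eventually_gt_atTop (0:ℝ)] with u hu
  rw [glmga_eq hb hu, ← hC,
    show -(1 / (2 * σ)) = 1 + (-(1 / (2 * σ) + 1)) by ring, Real.rpow_add hu, Real.rpow_one]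
  ring

lemma sq_mul_glmga_tendsto {σ a b : ℝ} (hσ : 0 < σ) (hσ2 : σ < 1/2) (ha : 0 < a) (hb : 0 < b) :
    Tendsto (fun u : ℝ => u^2 * glmga σ a b u) atTop (𝓝 0) := by
  set C := (2 * b) ^ a / (σ * betaFn a (1 / 2)) with hC
  have hexp : (0:ℝ) < 1/(2*σ) - 1 := by
    rw [sub_pos, lt_div_iff₀ (by linarith)]; linarith
  have h1 : Tendsto (fun u : ℝ => C * u ^ (-(1/(2*σ) - 1)) * (u ^ (-1/σ) + 2*b) ^ (-(a + 1/2)))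
      atTop (𝓝 (C * 0 * (2*b) ^ (-(a + 1/2)))) :=
    ((tendsto_const_nhds.mul (tendsto_rpow_neg_atTop hexp)).mul (denomPow_tendsto hσ hb))
  rw [mul_zero, zero_mul] at h1
  apply h1.congr'
  filter_upwards [eventually_gt_atTop (0:ℝ)] with u hu
  rw [glmga_eq hb hu, ← hC,
    show -(1 / (2 * σ) - 1) = 2 + (-(1 / (2 * σ) + 1)) by ring, Real.rpow_add hu,
    Real.rpow_two]
  ring

lemma ratio_tendsto {σ a b : ℝ} (hσ : 0 < σ) (hb : 0 < b) :
    Tendsto (fun u : ℝ => (a + 1/2)/σ * (u ^ (-1/σ) / (u ^ (-1/σ) + 2*b))) atTop (𝓝 0) := by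
  have h1 : Tendsto (fun u : ℝ => u ^ (-1/σ)) atTop (𝓝 0) := by
    rw [show (-1/σ : ℝ) = -(1/σ) by ring]
    exact tendsto_rpow_neg_atTop (by positivity)
  have h2 := h1.div (denom_tendsto hσ hb) (by positivity)
  rw [zero_div] at h2
  simpa using tendsto_const_nhds.mul h2

/- ### The main theorem -/

/-- asymptotic behaviour of the mean excess function of the GLMGA
distribution. -/
theorem glmga_mean_excess_asymptotics (σ a b : ℝ) (hσ : 0 < σ) (hσ2 : σ < 1 / 2)
    (ha : 0 < a) (hb : 0 < b) :
    Tendsto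
      (fun u : ℝ =>
        ((∫ y in Set.Ioi u, y * glmga σ a b y) / (∫ y in Set.Ioi u, glmga σ a b y) - u) / u)
      atTop (𝓝 (2 * σ / (1 - 2 * σ))) := by
  set f := glmga σ a b with hf
  set g : ℝ → ℝ := fun u => ∫ y in Ioi u, f y with hg
  set h : ℝ → ℝ := fun u => ∫ y in Ioi u, y * f y with hh
  set R : ℝ → ℝ := fun u => (a + 1/2)/σ * (u ^ (-1/σ) / (u ^ (-1/σ) + 2*b)) with hR
  have hα : 1 < 1/(2*σ) := by rw [lt_div_iff₀ (by linarith)]; linarith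
  have hfint : IntegrableOn f (Ioi 1) := glmga_integrableOn hσ hσ2 ha hb
  have hyfint : IntegrableOn (fun y => y * f y) (Ioi 1) := glmga_mul_integrableOn hσ hσ2 ha hb
  have hfpos : ∀ u : ℝ, 0 < u → 0 < f u := fun u hu => glmga_pos hσ ha hb hu
  -- Step A : g u / (u * f u) → 2σ
  have hgderiv : ∀ᶠ u in atTop, HasDerivAt g (-f u) u := by
    filter_upwards [eventually_gt_atTop (1:ℝ)] with u hu
    exact tail_hasDerivAt f hfint (fun x hx => glmga_continuousAt hb hx) hu
  have hufderiv : ∀ u : ℝ, 1 < u → HasDerivAt (fun x => x * f x) (f u * (R u - 1/(2*σ))) u := by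
    intro u hu
    have hu0 : (0:ℝ) < u := lt_trans one_pos hu
    have hDu : (0:ℝ) < u ^ (-1/σ) + 2*b := by
      have := Real.rpow_pos_of_pos hu0 (-1/σ); linarith
    have := (hasDerivAt_id u).mul (glmga_hasDerivAt (a := a) hσ hb hu0)
    refine this.congr_deriv ?_
    symm
    simp only [hR, id_eq, ← hf]
    field_simp
    ring
  have hRlt : ∀ᶠ u in atTop, R u < 1/(2*σ) :=
    (ratio_tendsto hσ hb).eventually_lt_const (by positivity)
  have hden_ne : ∀ᶠ u in atTop, f u * (R u - 1/(2*σ)) ≠ 0 := by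
    filter_upwards [hRlt, eventually_gt_atTop (1:ℝ)] with u h1 h2
    exact mul_ne_zero (hfpos u (lt_trans one_pos h2)).ne' (by linarith)
  have stepA : Tendsto (fun u => g u / (u * f u)) atTop (𝓝 (2*σ)) := by
    apply HasDerivAt.lhopital_zero_atTop hgderiv
      (by filter_upwards [eventually_gt_atTop (1:ℝ)] with u hu using hufderiv u hu)
      hden_ne (tail_tendsto f hfint) (mul_glmga_tendsto hσ hσ2 ha hb)
    have hlim : Tendsto (fun u => (-1) / (R u - 1/(2*σ))) atTop (𝓝 ((-1)/(0 - 1/(2*σ)))) := by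
      apply tendsto_const_nhds.div (((ratio_tendsto hσ hb)).sub tendsto_const_nhds)
      simp only [zero_sub, ne_eq, neg_eq_zero]
      positivity
    have hval : (-1:ℝ)/(0 - 1/(2*σ)) = 2*σ := by
      field_simp
      ring
    rw [hval] at hlim
    apply hlim.congr'
    filter_upwards [hRlt, eventually_gt_atTop (1:ℝ)] with u h1 h2
    have hfu := hfpos u (lt_trans one_pos h2)
    rw [div_eq_div_iff (by linarith) (mul_ne_zero hfu.ne' (by linarith))]
    ring
  -- Step B : h u / (u * g u) → 1/(1-2σ)
  have hglt : ∀ᶠ u in atTop, g u / (u * f u) < 1 :=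
    stepA.eventually_lt_const (by linarith)
  have hhderiv : ∀ᶠ u in atTop, HasDerivAt h (-(u * f u)) u := by
    filter_upwards [eventually_gt_atTop (1:ℝ)] with u hu
    exact tail_hasDerivAt _ hyfint
      (fun x hx => continuousAt_id.mul (glmga_continuousAt hb hx)) hu
  have hugderiv : ∀ᶠ u in atTop, HasDerivAt (fun x => x * g x) (g u - u * f u) u := by
    filter_upwards [hgderiv, eventually_gt_atTop (1:ℝ)] with u hd hu
    have := (hasDerivAt_id u).mul hd
    simp only [id_eq] at this
    refine this.congr_deriv ?_
    symm
    ring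
  have hden2_ne : ∀ᶠ u in atTop, g u - u * f u ≠ 0 := by
    filter_upwards [hglt, eventually_gt_atTop (1:ℝ)] with u h1 h2
    have hfu : 0 < u * f u := mul_pos (lt_trans one_pos h2) (hfpos u (lt_trans one_pos h2))
    have : g u < u * f u := by
      have := (div_lt_one hfu).mp h1
      linarith
    linarith
  have hug0 : Tendsto (fun u => u * g u) atTop (𝓝 0) := by
    have h1 : Tendsto (fun u => (g u / (u * f u)) * (u^2 * f u)) atTop (𝓝 (2*σ * 0)) :=
      stepA.mul (sq_mul_glmga_tendsto hσ hσ2 ha hb)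
    rw [mul_zero] at h1
    apply h1.congr'
    filter_upwards [eventually_gt_atTop (1:ℝ)] with u hu
    have hu0 : (0:ℝ) < u := lt_trans one_pos hu
    have hfu := hfpos u hu0
    field_simp
  have stepB : Tendsto (fun u => h u / (u * g u)) atTop (𝓝 (1/(1-2*σ))) := by
    apply HasDerivAt.lhopital_zero_atTop hhderiv hugderiv hden2_ne
      (tail_tendsto _ hyfint) hug0
    have hlim : Tendsto (fun u => (-1) / (g u / (u * f u) - 1)) atTop
        (𝓝 ((-1)/(2*σ - 1))) := by
      apply tendsto_const_nhds.div (stepA.sub tendsto_const_nhds)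
      intro hcon
      have : (2:ℝ)*σ = 1 := by linarith
      linarith
    have hval : (-1:ℝ)/(2*σ - 1) = 1/(1-2*σ) := by
      rw [div_eq_div_iff (by intro hc; apply (by linarith : (2:ℝ)*σ ≠ 1); linarith)
        (by intro hc; apply (by linarith : (2:ℝ)*σ ≠ 1); linarith)]
      ring
    rw [hval] at hlim
    apply hlim.congr'
    filter_upwards [hglt, eventually_gt_atTop (1:ℝ)] with u h1 h2
    have hu0 : (0:ℝ) < u := lt_trans one_pos h2
    have hfu : 0 < u * f u := mul_pos hu0 (hfpos u hu0)
    have hne : g u / (u * f u) - 1 ≠ 0 := by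
      intro hc
      rw [sub_eq_zero] at hc
      rw [hc] at h1
      exact lt_irrefl 1 h1
    have hne2 : g u - u * f u ≠ 0 := by
      intro hc
      apply hne
      rw [sub_eq_zero] at hc ⊢
      rw [hc, div_self hfu.ne']
    rw [div_eq_div_iff hne hne2]
    field_simp
    rw [mul_sub, mul_div_cancel₀ _ (hfpos u hu0).ne', mul_comm (f u) u]
  -- final assembly
  have final : Tendsto (fun u => h u / (u * g u) - 1) atTop (𝓝 (1/(1-2*σ) - 1)) :=
    stepB.sub tendsto_const_nhds
  have hval2 : 1/(1-2*σ) - 1 = 2*σ/(1-2*σ) := by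
    have h12 : (1:ℝ) - 2*σ ≠ 0 := by intro hc; apply (by linarith : (2:ℝ)*σ ≠ 1); linarith
    field_simp
    ring
  rw [hval2] at final
  apply final.congr'
  filter_upwards [eventually_gt_atTop (1:ℝ)] with u hu
  have hu0 : (0:ℝ) < u := lt_trans one_pos hu
  rw [sub_div, div_div, div_self hu0.ne', mul_comm (g u) u]
end
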